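/- Let a, P_max > 0 and for integers n ≥ 2 define b*_n = ((a·P_max/((1 + a·P_max)^{1/n} − 1)) − 1)/((n−1)·P_max). Then the sequence (b*_n)_{n ≥ 2} is monotonically increasing in n. -/

import Mathlib

open Real Set


lemma pade_exp {u : ℝ} (hu : 0 ≤ u) : (2 - u) * exp u ≤ 2 + u := by
  have hmono : Monotone (fun u : ℝ => (2 + u) * exp (-u) + u - 2) := by
    apply monotone_of_hasDerivAt_nonneg (f' := fun u => 1 - (1 + u) * exp (-u))
    · intro x
      have h1 : HasDerivAt (fun u : ℝ => exp (-u)) (-exp (-x)) x := by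
        simpa [Function.comp_def] using (Real.hasDerivAt_exp (-x)).comp x ((hasDerivAt_id x).neg)
      have h2 : HasDerivAt (fun u : ℝ => (2 + u) * exp (-u))
          (1 * exp (-x) + (2 + x) * (-exp (-x))) x := by
        simpa [Pi.add_def, Pi.mul_def] using (((hasDerivAt_const x (2:ℝ)).add (hasDerivAt_id x))).mul h1
      have := (h2.add (hasDerivAt_id x)).sub_const 2
      refine (this : HasDerivAt (fun u : ℝ => (2 + u) * exp (-u) + u - 2) _ x).congr_deriv ?_
      ring
    · intro x
      have h : (1 + x) * exp (-x) ≤ 1 := by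
        rcases le_or_gt (1 + x) 0 with h | h
        · exact le_trans (mul_nonpos_of_nonpos_of_nonneg h (exp_nonneg _)) zero_le_one
        · have := add_one_le_exp x
          calc (1 + x) * exp (-x) ≤ exp x * exp (-x) := by
                apply mul_le_mul_of_nonneg_right (by linarith) (exp_nonneg _)
            _ = 1 := by rw [← exp_add]; simp
      simp only [Pi.zero_apply]; linarith
  have h0 := hmono hu
  simp only [add_zero, neg_zero, exp_zero, mul_one] at h0
  -- h0 : 0 ≤ (2+u) * exp (-u) + u - 2
  have hE : 0 < exp u := exp_pos u
  have : (2 - u) ≤ (2 + u) * exp (-u) := by linarith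
  calc (2 - u) * exp u ≤ ((2 + u) * exp (-u)) * exp u := by
        rcases le_or_gt (2 - u) 0 with h | h
        · exact le_trans (mul_nonpos_of_nonpos_of_nonneg h hE.le)
            (mul_nonneg (mul_nonneg (by linarith) (exp_nonneg _)) hE.le)
        · exact mul_le_mul_of_nonneg_right this hE.le
    _ = 2 + u := by rw [mul_assoc, ← exp_add]; simp

lemma phi_half {u : ℝ} (hu : 0 < u) : 1/2 ≤ exp u / (exp u - 1) - 1/u := by
  have hE : 1 < exp u := by rw [← exp_zero]; exact exp_lt_exp.2 hu
  have hE1 : 0 < exp u - 1 := by linarith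
  have key := pade_exp hu.le
  rw [le_sub_iff_add_le, div_add_div _ _ (by positivity) hu.ne', div_le_div_iff₀ (by positivity) (by positivity)]
  nlinarith [exp_pos u]


noncomputable def Dfun (L t : ℝ) : ℝ :=
  log (exp (L*t) - 1) - log t - (log (exp (L*(1-t)) - 1) - log (1-t)) - L*t

lemma Dfun_hasDerivAt {L t : ℝ} (hL : 0 < L) (ht : t ∈ Ioo (0:ℝ) 1) :
    HasDerivAt (Dfun L)
      (L * exp (L*t) / (exp (L*t) - 1) - 1/t
        + (L * exp (L*(1-t)) / (exp (L*(1-t)) - 1) - 1/(1-t)) - L) t := by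
  obtain ⟨ht0, ht1⟩ := ht
  have hu : 0 < L * t := by positivity
  have hv : 0 < L * (1 - t) := by nlinarith
  have hE1 : (0:ℝ) < exp (L*t) - 1 := by
    have : 1 < exp (L*t) := by rw [← exp_zero]; exact exp_lt_exp.2 hu
    linarith
  have hE2 : (0:ℝ) < exp (L*(1-t)) - 1 := by
    nlinarith [add_one_le_exp (L*(1-t))]
  have h1 : HasDerivAt (fun t => log (exp (L*t) - 1)) (exp (L*t) * L / (exp (L*t) - 1)) t := by
    have hinner : HasDerivAt (fun t : ℝ => exp (L*t) - 1) (exp (L*t) * L) t := by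
      have := ((Real.hasDerivAt_exp (L*t)).comp t ((hasDerivAt_id t).const_mul L)).sub_const 1
      simpa using this
    exact hinner.log hE1.ne'
  have h2 : HasDerivAt (fun t : ℝ => log t) t⁻¹ t := Real.hasDerivAt_log ht0.ne'
  have h3 : HasDerivAt (fun t => log (exp (L*(1-t)) - 1))
      (exp (L*(1-t)) * (-L) / (exp (L*(1-t)) - 1)) t := by
    have hlin : HasDerivAt (fun t : ℝ => L * (1 - t)) (-L) t := by
      have := ((hasDerivAt_id t).const_sub 1).const_mul L
      simpa using this
    have hinner : HasDerivAt (fun t : ℝ => exp (L*(1-t)) - 1) (exp (L*(1-t)) * (-L)) t := by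
      have := ((Real.hasDerivAt_exp (L*(1-t))).comp t hlin).sub_const 1
      simpa [mul_comm] using this
    exact hinner.log hE2.ne'
  have h4 : HasDerivAt (fun t : ℝ => log (1-t)) (-(1-t)⁻¹) t := by
    have hlin : HasDerivAt (fun t : ℝ => 1 - t) (-1) t := by
      simpa using ((hasDerivAt_id t).const_sub 1)
    have := hlin.log (by linarith : (1:ℝ) - t ≠ 0)
    simpa [div_eq_mul_inv] using this
  have h5 : HasDerivAt (fun t : ℝ => L * t) L t := by
    simpa using (hasDerivAt_id t).const_mul L
  have := ((((h1.sub h2).sub (h3.sub h4)).sub h5)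
    : HasDerivAt (Dfun L) _ t)
  refine this.congr_deriv ?_
  field_simp
  ring

lemma Dfun_mono {L : ℝ} (hL : 0 < L) : MonotoneOn (Dfun L) (Ioo (0:ℝ) 1) := by
  apply monotoneOn_of_hasDerivWithinAt_nonneg (convex_Ioo 0 1)
    (f' := fun t => L * exp (L*t) / (exp (L*t) - 1) - 1/t
        + (L * exp (L*(1-t)) / (exp (L*(1-t)) - 1) - 1/(1-t)) - L)
  · intro t ht
    exact ((Dfun_hasDerivAt hL ht).continuousAt).continuousWithinAt
  · intro t ht
    rw [interior_Ioo] at ht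
    exact (Dfun_hasDerivAt hL ht).hasDerivWithinAt
  · intro t ht
    rw [interior_Ioo] at ht
    obtain ⟨ht0, ht1⟩ := ht
    have hu : 0 < L * t := by positivity
    have hv : 0 < L * (1 - t) := by nlinarith
    have p1 := mul_le_mul_of_nonneg_left (phi_half hu) hL.le
    have p2 := mul_le_mul_of_nonneg_left (phi_half hv) hL.le
    have e1 : L * (exp (L*t) / (exp (L*t) - 1) - 1/(L*t))
        = L * exp (L*t) / (exp (L*t) - 1) - 1/t := by
      rw [mul_sub, ← mul_div_assoc, mul_one_div, div_mul_cancel_left₀ hL.ne', one_div]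
    have e2 : L * (exp (L*(1-t)) / (exp (L*(1-t)) - 1) - 1/(L*(1-t)))
        = L * exp (L*(1-t)) / (exp (L*(1-t)) - 1) - 1/(1-t) := by
      rw [mul_sub, ← mul_div_assoc, mul_one_div, div_mul_cancel_left₀ hL.ne', one_div]
    rw [e1] at p1
    rw [e2] at p2
    linarith
theorem tdm_threshold_monotone (a Pmax : ℝ) (ha : 0 < a) (hP : 0 < Pmax) :
    ∀ m n : ℕ, 2 ≤ m → m ≤ n →
      (a * Pmax / ((1 + a * Pmax) ^ ((1:ℝ) / m) - 1) - 1) / ((m - 1) * Pmax)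
        ≤ (a * Pmax / ((1 + a * Pmax) ^ ((1:ℝ) / n) - 1) - 1) / ((n - 1) * Pmax) := by
  intro m n hm hn
  have hx : 0 < a * Pmax := mul_pos ha hP
  set x := a * Pmax with hxdef
  have hc : (0:ℝ) < 1 + x := by linarith
  have hL : 0 < log (1 + x) := log_pos (by linarith)
  set L := log (1 + x) with hLdef
  have key : ∀ k : ℕ, 2 ≤ k →
      (x / ((1 + x) ^ ((1:ℝ) / k) - 1) - 1) / (((k:ℝ) - 1) * Pmax)
        = exp (-(Dfun L (1 / (k:ℝ)))) / Pmax := by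
    intro k hk
    have hk0 : (0:ℝ) < k := by
      have : 0 < k := by omega
      exact_mod_cast this
    have hk1 : (1:ℝ) < k := by
      have : 1 < k := by omega
      exact_mod_cast this
    have ht0 : 0 < 1/(k:ℝ) := by positivity
    have ht1 : 1/(k:ℝ) < 1 := by rw [div_lt_one hk0]; exact hk1
    set t := 1/(k:ℝ) with htdef
    have hrpow : (1 + x) ^ ((1:ℝ)/(k:ℝ)) = exp (L * t) := by
      rw [rpow_def_of_pos hc, htdef, ← hLdef]
    have hxL : x = exp L - 1 := by rw [hLdef, exp_log hc]; ring
    have hE1 : 0 < exp (L*t) - 1 := by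
      nlinarith [add_one_le_exp (L*t), mul_pos hL ht0]
    have hE2 : 0 < exp (L*(1-t)) - 1 := by
      nlinarith [add_one_le_exp (L*(1-t)), mul_pos hL (by linarith : (0:ℝ) < 1 - t)]
    have hkt : (k:ℝ) - 1 = (1-t)/t := by
      rw [htdef]; field_simp
    have hexpD : exp (-(Dfun L t))
        = exp (L*t) * t * (exp (L*(1-t)) - 1) / ((exp (L*t) - 1) * (1-t)) := by
      rw [show -(Dfun L t) = L*t + log t + log (exp (L*(1-t)) - 1)
            - log (exp (L*t) - 1) - log (1-t) by unfold Dfun; ring]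
      rw [exp_sub, exp_sub, exp_add, exp_add, exp_log ht0, exp_log hE2, exp_log hE1,
        exp_log (by linarith : (0:ℝ) < 1 - t)]
      rw [div_div]
    have hkey2 : x - (exp (L*t) - 1) = exp (L*t) * (exp (L*(1-t)) - 1) := by
      rw [hxL, mul_sub, mul_one, ← exp_add]
      have : L * t + L * (1 - t) = L := by ring
      rw [this]
      ring
    have hnum : x / (exp (L*t) - 1) - 1 = exp (L*t) * (exp (L*(1-t)) - 1) / (exp (L*t) - 1) := by
      rw [← hkey2]
      field_simp
    have h1mt : (0:ℝ) < 1 - t := by linarith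
    rw [hrpow, hnum, hkt, hexpD]
    clear_value t L
    rw [div_eq_div_iff (mul_pos (div_pos h1mt ht0) hP).ne' hP.ne']
    field_simp
  have h2n : 2 ≤ n := le_trans hm hn
  rw [key m hm, key n h2n]
  have hmem : ∀ k : ℕ, 2 ≤ k → 1/(k:ℝ) ∈ Set.Ioo (0:ℝ) 1 := by
    intro k hk
    have hk0 : (0:ℝ) < k := by
      have : 0 < k := by omega
      exact_mod_cast this
    have hk1 : (1:ℝ) < k := by
      have : 1 < k := by omega
      exact_mod_cast this
    exact ⟨by positivity, by rw [div_lt_one hk0]; exact hk1⟩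
  have hle : (1:ℝ)/(n:ℝ) ≤ 1/(m:ℝ) := by
    apply one_div_le_one_div_of_le
    · have : 0 < m := by omega
      exact_mod_cast this
    · exact_mod_cast hn
  have hD := Dfun_mono hL (hmem n h2n) (hmem m hm) hle
  have hexp : exp (-(Dfun L (1/(m:ℝ)))) ≤ exp (-(Dfun L (1/(n:ℝ)))) :=
    exp_le_exp.2 (neg_le_neg hD)
  gcongr
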